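/- arXiv:2603.25547 — 3 statements merged into one kernel-verified Lean document; each statement's English description precedes it below -/
import Mathlib

section
/- Suppose G satisfies G(t,s) = sin(ω(t-s))/ω - (1/ω)∫_s^t sin(ω(t-τ)) q(τ) G(τ,s) dτ with ω > 0, q continuous and |q| integrable with tail Q(s) = ∫_s^∞ |q(τ)| dτ. Then G(t,s) = sin(ω(t-s))/ω - (1/ω²)∫_s^t sin(ω(t-τ)) sin(ω(τ-s)) q(τ) dτ + E(t,s), where |E(t,s)| ≤ e^{Q(s)/ω} Q(s)² / (2ω³) for all t ≥ s ≥ 0. -/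
open MeasureTheory Filter intervalIntegral

private lemma prim_hasDerivAt {f : ℝ → ℝ} (hf : Continuous f) (a b : ℝ) :
    HasDerivAt (fun u => ∫ x in a..u, f x) (f b) b :=
  intervalIntegral.integral_hasDerivAt_right (hf.intervalIntegrable a b)
    (hf.stronglyMeasurable.stronglyMeasurableAtFilter) hf.continuousAt

theorem stmt_5 (ω : ℝ) (hω : 0 < ω) (q : ℝ → ℝ) (hq : Continuous q)
    (hqint : IntegrableOn (fun τ => |q τ|) (Set.Ici 0))
    (Q : ℝ → ℝ) (hQ : ∀ s, Q s = ∫ τ in Set.Ici s, |q τ|)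
    (G : ℝ → ℝ → ℝ) (hG : Continuous fun pr : ℝ × ℝ => G pr.1 pr.2)
    (hVolt : ∀ s t, 0 ≤ s → s ≤ t →
      G t s = Real.sin (ω * (t - s)) / ω -
        (1/ω) * ∫ τ in s..t, Real.sin (ω * (t - τ)) * q τ * G τ s) :
    ∀ s t, 0 ≤ s → s ≤ t →
      |G t s - (Real.sin (ω * (t - s)) / ω -
        (1/ω ^ 2) * ∫ τ in s..t,
          Real.sin (ω * (t - τ)) * Real.sin (ω * (τ - s)) * q τ)| ≤
      Real.exp (Q s / ω) * (Q s) ^ 2 / (2 * ω ^ 3) := by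
  intro s t hs hst
  have hqc : Continuous fun τ => |q τ| := hq.abs
  have huG : Continuous fun τ => G τ s :=
    hG.comp (continuous_id.prodMk continuous_const)
  have hqint' : IntegrableOn (fun τ => |q τ|) (Set.Ici s) :=
    hqint.mono_set (Set.Ici_subset_Ici.mpr hs)
  set K := Q s with hK
  have hKnn : 0 ≤ K := by
    rw [hK, hQ]; exact integral_nonneg fun τ => abs_nonneg _
  -- P := primitive of |q| from s
  set P : ℝ → ℝ := fun r => ∫ τ in s..r, |q τ| with hPdef
  have hP_deriv : ∀ r, HasDerivAt P (|q r|) r := fun r => prim_hasDerivAt hqc s r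
  have hP_cont : Continuous P := by
    have h : Differentiable ℝ P := fun r => (hP_deriv r).differentiableAt
    exact h.continuous
  have hP_nonneg : ∀ r, s ≤ r → 0 ≤ P r := fun r hr =>
    intervalIntegral.integral_nonneg hr fun τ _ => abs_nonneg _
  have hP_le : ∀ r, s ≤ r → P r ≤ K := by
    intro r hr
    rw [hPdef]
    simp only
    rw [intervalIntegral.integral_of_le hr, hK, hQ]
    exact setIntegral_mono_set hqint'
      (Filter.Eventually.of_forall fun τ => abs_nonneg _)
      (Filter.Eventually.of_forall fun x hx => hx.1.le)
  -- w := ∫ |q| |G|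
  set w : ℝ → ℝ := fun r => ∫ τ in s..r, |q τ| * |G τ s| with hwdef
  have hwInt_cont : Continuous fun τ => |q τ| * |G τ s| := hqc.mul huG.abs
  have hw_deriv : ∀ r, HasDerivAt w (|q r| * |G r s|) r := fun r =>
    prim_hasDerivAt hwInt_cont s r
  have hw_cont : Continuous w := by
    have h : Differentiable ℝ w := fun r => (hw_deriv r).differentiableAt
    exact h.continuous
  have hw_nonneg : ∀ r, s ≤ r → 0 ≤ w r := fun r hr =>
    intervalIntegral.integral_nonneg hr fun τ _ => mul_nonneg (abs_nonneg _) (abs_nonneg _)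
  -- key integral inequality from Volterra
  have hkey : ∀ r, s ≤ r → |G r s| ≤ (1 + w r) / ω := by
    intro r hr
    rw [hVolt s r hs hr]
    have hIa : |∫ τ in s..r, Real.sin (ω * (r - τ)) * q τ * G τ s| ≤ w r := by
      have hc : Continuous fun τ => Real.sin (ω * (r - τ)) * q τ * G τ s :=
        ((Real.continuous_sin.comp (continuous_const.mul
          (continuous_const.sub continuous_id))).mul hq).mul huG
      calc |∫ τ in s..r, Real.sin (ω * (r - τ)) * q τ * G τ s|
          ≤ ∫ τ in s..r, |Real.sin (ω * (r - τ)) * q τ * G τ s| :=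
            intervalIntegral.abs_integral_le_integral_abs hr
        _ ≤ ∫ τ in s..r, |q τ| * |G τ s| := by
            apply intervalIntegral.integral_mono_on hr
              (hc.abs.intervalIntegrable s r) (hwInt_cont.intervalIntegrable s r)
            intro τ _
            rw [abs_mul, abs_mul]
            have h1 : |Real.sin (ω * (r - τ))| ≤ 1 := Real.abs_sin_le_one _
            nlinarith [abs_nonneg (q τ), abs_nonneg (G τ s),
              mul_nonneg (abs_nonneg (q τ)) (abs_nonneg (G τ s))]
        _ = w r := rfl
    have h1 : |Real.sin (ω * (r - s)) / ω| ≤ 1 / ω := by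
      rw [abs_div, abs_of_pos hω]
      exact div_le_div_of_nonneg_right (Real.abs_sin_le_one _) hω.le
    calc |Real.sin (ω * (r - s)) / ω - (1/ω) * ∫ τ in s..r,
            Real.sin (ω * (r - τ)) * q τ * G τ s|
        ≤ |Real.sin (ω * (r - s)) / ω| +
          |(1/ω) * ∫ τ in s..r, Real.sin (ω * (r - τ)) * q τ * G τ s| := abs_sub _ _
      _ ≤ 1 / ω + (1/ω) * w r := by
          refine add_le_add h1 ?_
          rw [abs_mul, abs_of_pos (by positivity : (0:ℝ) < 1/ω)]
          exact mul_le_mul_of_nonneg_left hIa (by positivity)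
      _ = (1 + w r) / ω := by ring
  -- Grönwall
  set ψ : ℝ → ℝ := fun r => (1 + w r) * Real.exp (-(P r) / ω) with hψdef
  have hψ_deriv : ∀ r, HasDerivAt ψ
      ((|q r| * |G r s|) * Real.exp (-(P r) / ω) +
        (1 + w r) * (Real.exp (-(P r) / ω) * (-(|q r|) / ω))) r := by
    intro r
    have h1 : HasDerivAt (fun x => 1 + w x) (|q r| * |G r s|) r := (hw_deriv r).const_add 1
    have h2 : HasDerivAt (fun x => -(P x) / ω) (-(|q r|) / ω) r := ((hP_deriv r).neg).div_const ω
    exact h1.mul h2.exp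
  have hψ_anti : AntitoneOn ψ (Set.Ici s) := by
    apply antitoneOn_of_deriv_nonpos (convex_Ici s)
    · exact ((continuous_const.add hw_cont).mul
        ((hP_cont.neg.div_const ω).rexp)).continuousOn
    · intro x _
      exact ((hψ_deriv x).differentiableAt).differentiableWithinAt
    · intro x hx
      rw [interior_Ici] at hx
      rw [(hψ_deriv x).deriv]
      have hb := hkey x hx.le
      have hq0 : (0:ℝ) ≤ |q x| := abs_nonneg (q x)
      have he : 0 < Real.exp (-(P x) / ω) := Real.exp_pos _
      have hle : |q x| * |G x s| ≤ |q x| * ((1 + w x) / ω) :=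
        mul_le_mul_of_nonneg_left hb hq0
      have heq : |q x| * |G x s| * Real.exp (-P x / ω) +
          (1 + w x) * (Real.exp (-P x / ω) * (-|q x| / ω)) =
          Real.exp (-P x / ω) * (|q x| * |G x s| - |q x| * ((1 + w x) / ω)) := by
        ring
      rw [heq]
      exact mul_nonpos_of_nonneg_of_nonpos he.le (by linarith)
  have hψs : ψ s = 1 := by
    simp [hψdef, hwdef, hPdef, intervalIntegral.integral_same]
  have hGbd : ∀ r, s ≤ r → |G r s| ≤ Real.exp (K / ω) / ω := by
    intro r hr
    have h1 : ψ r ≤ 1 := by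
      have := hψ_anti (Set.self_mem_Ici) hr hr
      rwa [hψs] at this
    have h2 : 1 + w r ≤ Real.exp (P r / ω) := by
      have he : (0:ℝ) < Real.exp (P r / ω) := Real.exp_pos _
      calc 1 + w r = (1 + w r) * Real.exp (-(P r) / ω) * Real.exp (P r / ω) := by
            rw [mul_assoc, ← Real.exp_add, neg_div, neg_add_cancel, Real.exp_zero, mul_one]
        _ ≤ 1 * Real.exp (P r / ω) := mul_le_mul_of_nonneg_right h1 he.le
        _ = Real.exp (P r / ω) := one_mul _
    have h3 : Real.exp (P r / ω) ≤ Real.exp (K / ω) :=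
      Real.exp_le_exp.mpr (div_le_div_of_nonneg_right (hP_le r hr) hω.le) -- check name
    calc |G r s| ≤ (1 + w r) / ω := hkey r hr
      _ ≤ Real.exp (K / ω) / ω := div_le_div_of_nonneg_right (h2.trans h3) hω.le
  -- first iterate bound
  have hB : ∀ r, s ≤ r → |G r s - Real.sin (ω * (r - s)) / ω| ≤
      Real.exp (K / ω) / ω ^ 2 * P r := by
    intro r hr
    have heq : G r s - Real.sin (ω * (r - s)) / ω =
        -(1/ω) * ∫ τ in s..r, Real.sin (ω * (r - τ)) * q τ * G τ s := by
      rw [hVolt s r hs hr]; ring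
    rw [heq, abs_mul, abs_neg, abs_of_pos (by positivity : (0:ℝ) < 1/ω)]
    have hc : Continuous fun τ => Real.sin (ω * (r - τ)) * q τ * G τ s :=
      ((Real.continuous_sin.comp (continuous_const.mul
        (continuous_const.sub continuous_id))).mul hq).mul huG
    have hIb : |∫ τ in s..r, Real.sin (ω * (r - τ)) * q τ * G τ s| ≤
        (Real.exp (K / ω) / ω) * P r := by
      calc |∫ τ in s..r, Real.sin (ω * (r - τ)) * q τ * G τ s|
          ≤ ∫ τ in s..r, |Real.sin (ω * (r - τ)) * q τ * G τ s| :=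
            intervalIntegral.abs_integral_le_integral_abs hr
        _ ≤ ∫ τ in s..r, (Real.exp (K / ω) / ω) * |q τ| := by
            apply intervalIntegral.integral_mono_on hr
              (hc.abs.intervalIntegrable s r) ((continuous_const.mul hqc).intervalIntegrable s r)
            intro τ hτ
            rw [abs_mul, abs_mul]
            have h1 : |Real.sin (ω * (r - τ))| ≤ 1 := Real.abs_sin_le_one _
            have h2 := hGbd τ hτ.1
            simp only [Pi.mul_apply]
            nlinarith [abs_nonneg (q τ), abs_nonneg (G τ s),
              mul_nonneg (abs_nonneg (q τ)) (abs_nonneg (G τ s)),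
              Real.exp_pos (K / ω)]
        _ = (Real.exp (K / ω) / ω) * P r := intervalIntegral.integral_const_mul _ _
    calc (1/ω) * |∫ τ in s..r, Real.sin (ω * (r - τ)) * q τ * G τ s|
        ≤ (1/ω) * ((Real.exp (K / ω) / ω) * P r) :=
          mul_le_mul_of_nonneg_left hIb (by positivity)
      _ = Real.exp (K / ω) / ω ^ 2 * P r := by ring
  -- rewrite the error term
  have hc1 : Continuous fun τ => Real.sin (ω * (t - τ)) * q τ * G τ s :=
    ((Real.continuous_sin.comp (continuous_const.mul
      (continuous_const.sub continuous_id))).mul hq).mul huG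
  have hc2 : Continuous fun τ => Real.sin (ω * (t - τ)) * q τ *
      (Real.sin (ω * (τ - s)) / ω) :=
    ((Real.continuous_sin.comp (continuous_const.mul
      (continuous_const.sub continuous_id))).mul hq).mul
      ((Real.continuous_sin.comp (continuous_const.mul
        (continuous_id.sub continuous_const))).div_const ω)
  have hE : G t s - (Real.sin (ω * (t - s)) / ω -
      (1/ω ^ 2) * ∫ τ in s..t, Real.sin (ω * (t - τ)) * Real.sin (ω * (τ - s)) * q τ) =
      -(1/ω) * ∫ τ in s..t, Real.sin (ω * (t - τ)) * q τ *
        (G τ s - Real.sin (ω * (τ - s)) / ω) := by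
    have hsub : (∫ τ in s..t, Real.sin (ω * (t - τ)) * q τ *
        (G τ s - Real.sin (ω * (τ - s)) / ω)) =
        (∫ τ in s..t, Real.sin (ω * (t - τ)) * q τ * G τ s) -
        (1/ω) * ∫ τ in s..t, Real.sin (ω * (t - τ)) * Real.sin (ω * (τ - s)) * q τ := by
      rw [← intervalIntegral.integral_const_mul,
        ← intervalIntegral.integral_sub (hc1.intervalIntegrable s t)
          (by
            apply Continuous.intervalIntegrable
            exact continuous_const.mul (((Real.continuous_sin.comp (continuous_const.mul
              (continuous_const.sub continuous_id))).mul
              (Real.continuous_sin.comp (continuous_const.mul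
                (continuous_id.sub continuous_const)))).mul hq))]
      congr 1
      funext τ
      ring
    rw [hVolt s t hs hst, hsub]
    ring
  rw [hE, abs_mul, abs_neg, abs_of_pos (by positivity : (0:ℝ) < 1/ω)]
  -- bound the remaining integral
  have hcE : Continuous fun τ => Real.sin (ω * (t - τ)) * q τ *
      (G τ s - Real.sin (ω * (τ - s)) / ω) :=
    ((Real.continuous_sin.comp (continuous_const.mul
      (continuous_const.sub continuous_id))).mul hq).mul
      (huG.sub ((Real.continuous_sin.comp (continuous_const.mul
        (continuous_id.sub continuous_const))).div_const ω))
  have hIE : |∫ τ in s..t, Real.sin (ω * (t - τ)) * q τ *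
      (G τ s - Real.sin (ω * (τ - s)) / ω)| ≤
      Real.exp (K / ω) / ω ^ 2 * ∫ τ in s..t, |q τ| * P τ := by
    calc |∫ τ in s..t, Real.sin (ω * (t - τ)) * q τ *
          (G τ s - Real.sin (ω * (τ - s)) / ω)|
        ≤ ∫ τ in s..t, |Real.sin (ω * (t - τ)) * q τ *
          (G τ s - Real.sin (ω * (τ - s)) / ω)| :=
          intervalIntegral.abs_integral_le_integral_abs hst
      _ ≤ ∫ τ in s..t, Real.exp (K / ω) / ω ^ 2 * (|q τ| * P τ) := by
          apply intervalIntegral.integral_mono_on hst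
            (hcE.abs.intervalIntegrable s t)
            ((continuous_const.mul (hqc.mul hP_cont)).intervalIntegrable s t)
          intro τ hτ
          rw [abs_mul, abs_mul]
          have h1 : |Real.sin (ω * (t - τ))| ≤ 1 := Real.abs_sin_le_one _
          have h2 := hB τ hτ.1
          have h3 := hP_nonneg τ hτ.1
          simp only [Pi.mul_apply]
          nlinarith [abs_nonneg (q τ), abs_nonneg (G τ s - Real.sin (ω * (τ - s)) / ω),
            mul_nonneg (abs_nonneg (q τ)) (abs_nonneg (G τ s - Real.sin (ω * (τ - s)) / ω)),
            Real.exp_pos (K / ω)]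
      _ = Real.exp (K / ω) / ω ^ 2 * ∫ τ in s..t, |q τ| * P τ :=
          intervalIntegral.integral_const_mul _ _
  have hsq : (∫ τ in s..t, |q τ| * P τ) = P t * P t / 2 := by
    have hd : ∀ τ ∈ Set.uIcc s t, HasDerivAt (fun r => P r * P r / 2) (|q τ| * P τ) τ := by
      intro τ _
      have h : HasDerivAt (fun r => P r * P r / 2) ((|q τ| * P τ + P τ * |q τ|) / 2) τ :=
        ((hP_deriv τ).mul (hP_deriv τ)).div_const 2
      convert h using 1
      ring
    have := intervalIntegral.integral_eq_sub_of_hasDerivAt hd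
      ((hqc.mul hP_cont).intervalIntegrable s t)
    rw [this]
    have hPs : P s = 0 := intervalIntegral.integral_same
    rw [hPs]
    ring
  rw [hsq] at hIE
  have hfinal : (1/ω) * |∫ τ in s..t, Real.sin (ω * (t - τ)) * q τ *
      (G τ s - Real.sin (ω * (τ - s)) / ω)| ≤
      (1/ω) * (Real.exp (K / ω) / ω ^ 2 * (P t * P t / 2)) :=
    mul_le_mul_of_nonneg_left hIE (by positivity)
  refine hfinal.trans ?_
  have h4 := hP_le t hst
  have h5 := hP_nonneg t hst
  have he : (0:ℝ) < Real.exp (K / ω) := Real.exp_pos _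
  calc (1/ω) * (Real.exp (K / ω) / ω ^ 2 * (P t * P t / 2))
      ≤ (1/ω) * (Real.exp (K / ω) / ω ^ 2 * (K * K / 2)) := by
        apply mul_le_mul_of_nonneg_left _ (by positivity)
        apply mul_le_mul_of_nonneg_left _ (by positivity)
        nlinarith
    _ = Real.exp (K / ω) * K ^ 2 / (2 * ω ^ 3) := by
        field_simp
end

section
/- Let p be C¹, positive, decreasing on [0,∞), E(t,s) = exp(-(1/2)∫_s^t p(τ)dτ), and q(s) = -(1/4)p(s)² - (1/2)p'(s). Then ∫₀^t E(t,s)|q(s)| ds ≤ p(0) for all t ≥ 0. -/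
open MeasureTheory Filter intervalIntegral

theorem stmt_8 (p : ℝ → ℝ) (hp : ContDiff ℝ 1 p)
    (hpos : ∀ t, 0 ≤ t → 0 < p t)
    (hdec : ∀ t, 0 ≤ t → deriv p t < 0)
    (E : ℝ → ℝ → ℝ)
    (hE : ∀ t s, E t s = Real.exp (-(1/2) * ∫ τ in s..t, p τ))
    (q : ℝ → ℝ) (hq : ∀ s, q s = -(1/4) * (p s) ^ 2 - (1/2) * deriv p s) :
    ∀ t, 0 ≤ t → ∫ s in (0:ℝ)..t, E t s * |q s| ≤ p 0 := by
  intro t ht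
  have hpc : Continuous p := hp.continuous
  have hpd : Differentiable ℝ p := hp.differentiable one_ne_zero
  have hdc : Continuous (deriv p) := hp.continuous_deriv le_rfl
  set g : ℝ → ℝ := fun s => ∫ τ in s..t, p τ with hg
  have hgderiv : ∀ s, HasDerivAt g (-(p s)) s := by
    intro s
    exact intervalIntegral.integral_hasDerivAt_left (hpc.intervalIntegrable s t)
      (hpc.stronglyMeasurableAtFilter _ _) hpc.continuousAt
  have hgcont : Continuous g :=
    (Differentiable.continuous fun s => (hgderiv s).differentiableAt)
  have hEderiv : ∀ s, HasDerivAt (fun u => Real.exp (-(1/2) * g u))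
      ((1/2) * p s * Real.exp (-(1/2) * g s)) s := by
    intro s
    have h1 : HasDerivAt (fun u => -(1/2) * g u) (-(1/2) * -(p s)) s :=
      (hgderiv s).const_mul _
    have := h1.exp
    convert this using 1
    ring
  set F : ℝ → ℝ := fun s => (1/2) * p 0 * Real.exp (-(1/2) * g s) - (1/2) * p s with hF
  set f : ℝ → ℝ := fun s =>
    (1/2) * p 0 * ((1/2) * p s * Real.exp (-(1/2) * g s)) - (1/2) * deriv p s with hf
  have hFderiv : ∀ s, HasDerivAt F (f s) s := fun s =>
    ((hEderiv s).const_mul ((1/2) * p 0)).sub ((hpd s).hasDerivAt.const_mul (1/2))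
  have hfcont : Continuous f := by
    apply Continuous.sub
    · exact continuous_const.mul ((continuous_const.mul hpc).mul
        ((continuous_const.mul hgcont).rexp))
    · exact continuous_const.mul hdc
  have hEcont : Continuous fun s => E t s * |q s| := by
    have h1 : Continuous fun s => E t s := by
      simp only [hE]
      exact (continuous_const.mul hgcont).rexp
    have h2 : Continuous fun s => |q s| := by
      have : Continuous q := by
        simp only [funext hq]
        exact (continuous_const.mul (hpc.pow 2)).sub (continuous_const.mul hdc)
      exact this.abs
    exact h1.mul h2
  -- monotonicity of p on [0, t]
  have hmono : ∀ s, 0 ≤ s → p s ≤ p 0 := by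
    intro s hs
    rcases eq_or_lt_of_le hs with h | h
    · simp [← h]
    have : StrictAntiOn p (Set.Ici (0:ℝ)) := by
      apply strictAntiOn_of_deriv_neg (convex_Ici 0) (hpc.continuousOn)
      intro x hx
      exact hdec x (le_of_lt (by simpa using hx))
    exact le_of_lt (this (Set.self_mem_Ici) hs h)
  -- pointwise bound on [0, t]
  have hbound : ∀ s ∈ Set.Icc (0:ℝ) t, E t s * |q s| ≤ f s := by
    intro s hs
    have hs0 : 0 ≤ s := hs.1
    have hst : s ≤ t := hs.2
    have hps : 0 < p s := hpos s hs0
    have hds : deriv p s < 0 := hdec s hs0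
    have hqs : |q s| ≤ (1/4) * (p s) ^ 2 - (1/2) * deriv p s := by
      rw [hq]
      rw [abs_le]
      constructor <;> nlinarith [sq_nonneg (p s)]
    have hEle : E t s ≤ 1 := by
      rw [hE]
      apply Real.exp_le_one_iff.mpr
      have : 0 ≤ ∫ τ in s..t, p τ := by
        apply intervalIntegral.integral_nonneg hst
        intro u hu
        exact le_of_lt (hpos u (le_trans hs0 hu.1))
      nlinarith
    have hEpos : 0 < E t s := by rw [hE]; exact Real.exp_pos _
    have hEg : E t s = Real.exp (-(1/2) * g s) := hE t s
    have h1 : E t s * |q s| ≤ E t s * ((1/4) * (p s) ^ 2 - (1/2) * deriv p s) :=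
      mul_le_mul_of_nonneg_left hqs (le_of_lt hEpos)
    have h2 : E t s * ((1/4) * (p s) ^ 2 - (1/2) * deriv p s) ≤ f s := by
      rw [hf]
      simp only [← hEg]
      have hps0 : p s ≤ p 0 := hmono s hs0
      nlinarith [mul_pos hEpos hps, hEpos.le]
    exact h1.trans h2
  have hint : ∫ s in (0:ℝ)..t, E t s * |q s| ≤ ∫ s in (0:ℝ)..t, f s := by
    apply intervalIntegral.integral_mono_on ht
      (hEcont.intervalIntegrable 0 t) (hfcont.intervalIntegrable 0 t) hbound
  have hftc : ∫ s in (0:ℝ)..t, f s = F t - F 0 :=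
    intervalIntegral.integral_eq_sub_of_hasDerivAt
      (fun s _ => hFderiv s) (hfcont.intervalIntegrable 0 t)
  have hgt : g t = 0 := by simp [hg]
  have hgexp0 : 0 < Real.exp (-(1/2) * g 0) := Real.exp_pos _
  have hpt : 0 < p t := hpos t ht
  have hp0 : 0 < p 0 := hpos 0 le_rfl
  have hFt : F t - F 0 ≤ p 0 := by
    rw [hF]
    simp only [hgt, mul_zero, neg_zero, Real.exp_zero, mul_one]
    nlinarith
  linarith
end

section
/- Let ρ : [0,∞) → (0,∞) be differentiable and subexponential (ρ'(t)/ρ(t) → 0), let k : [0,∞) → ℝ satisfy |k(t)| ≤ C e^{-αt} for constants C, α > 0, and let z be continuous with z(t) = O(ρ(t)) as t → ∞. Then (k * z)(t) = ∫₀^t k(t-s) z(s) ds = O(ρ(t)) as t → ∞. -/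
open MeasureTheory Filter intervalIntegral Asymptotics

set_option maxHeartbeats 1000000 in
theorem stmt_13 (ρ : ℝ → ℝ) (hρpos : ∀ t, 0 < ρ t)
    (hρdiff : Differentiable ℝ ρ)
    (hsub : Tendsto (fun t => deriv ρ t / ρ t) atTop (nhds 0))
    (k : ℝ → ℝ) (C α : ℝ) (hC : 0 < C) (hα : 0 < α)
    (hk : ∀ t, 0 ≤ t → |k t| ≤ C * Real.exp (-α * t))
    (z : ℝ → ℝ) (hz : Continuous z)
    (M : ℝ) (hM : ∀ t, 0 ≤ t → |z t| ≤ M * ρ t) :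
    (fun t => ∫ s in (0:ℝ)..t, k (t - s) * z s) =O[atTop] ρ := by
  have hM0 : 0 ≤ M := by
    have h := hM 0 le_rfl
    nlinarith [abs_nonneg (z 0), hρpos 0]
  set ε := α / 2 with hεdef
  have hε0 : 0 < ε := by positivity
  -- get T ≥ 0 with |ρ'(u)| ≤ ε ρ(u) for u ≥ T
  have hev : ∀ᶠ u in atTop, |deriv ρ u / ρ u| < ε := by
    have := hsub.eventually (Metric.ball_mem_nhds (0:ℝ) hε0)
    filter_upwards [this] with u hu
    rw [Real.dist_eq, sub_zero] at hu
    exact hu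
  obtain ⟨T0, hT0⟩ := hev.exists_forall_of_atTop
  set T := max T0 0 with hTdef
  have hT0le : (0:ℝ) ≤ T := le_max_right _ _
  have hderiv : ∀ u, T ≤ u → |deriv ρ u| ≤ ε * ρ u := by
    intro u hu
    have h := hT0 u (le_trans (le_max_left _ _) hu)
    have hρu := hρpos u
    rw [abs_div, abs_of_pos hρu, div_lt_iff₀ hρu] at h
    linarith
  -- monotonicity of u ↦ ρ u * exp (ε u) on [T, ∞)
  have hmono : MonotoneOn (fun u => ρ u * Real.exp (ε * u)) (Set.Ici T) := by
    apply monotoneOn_of_deriv_nonneg (convex_Ici T)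
    · exact (hρdiff.continuous.mul (Real.continuous_exp.comp
        (continuous_const.mul continuous_id))).continuousOn
    · intro u _
      exact ((hρdiff u).mul (((differentiable_id.const_mul ε) u).exp)).differentiableWithinAt
    · intro u hu
      rw [interior_Ici] at hu
      have hexp' : HasDerivAt (fun u : ℝ => Real.exp (ε * u)) (Real.exp (ε * u) * ε) u := by
        simpa using ((hasDerivAt_id u).const_mul ε).exp
      have hd : HasDerivAt (fun u => ρ u * Real.exp (ε * u))
          (deriv ρ u * Real.exp (ε * u) + ρ u * (Real.exp (ε * u) * ε)) u :=
        (hρdiff u).hasDerivAt.mul hexp'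
      rw [hd.deriv]
      have h1 := hderiv u (le_of_lt hu)
      have h2 := Real.exp_pos (ε * u)
      have h3 := hρpos u
      have h4 : -(ε * ρ u) ≤ deriv ρ u := neg_le_of_abs_le h1
      nlinarith
  -- max of ρ on [0, T]
  obtain ⟨x₀, hx₀mem, hx₀⟩ := isCompact_Icc.exists_isMaxOn
    (Set.nonempty_Icc.2 hT0le) (hρdiff.continuous.continuousOn (s := Set.Icc 0 T))
  set R := ρ x₀ with hRdef
  have hR0 : 0 < R := hρpos x₀
  set K := C * M * (1 + R / ρ T) with hKdef
  have hρT0 := hρpos T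
  have hK0 : 0 ≤ K := by
    rw [hKdef]; positivity
  -- key pointwise bound
  have hkey : ∀ t, T ≤ t → ∀ s ∈ Set.Icc (0:ℝ) t,
      |k (t - s) * z s| ≤ K * (Real.exp (-ε * (t - s)) * ρ t) := by
    intro t ht s hs
    obtain ⟨hs0, hst⟩ := hs
    have hρs0 := hρpos s
    have hρt0 := hρpos t
    have hts : 0 ≤ t - s := by linarith
    have h1 : |k (t - s) * z s| ≤ (C * Real.exp (-α * (t - s))) * (M * ρ s) := by
      rw [abs_mul]
      exact mul_le_mul (hk _ hts) (hM s hs0) (abs_nonneg _) (by positivity)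
    have hexp : Real.exp (-α * (t - s)) =
        Real.exp (-ε * (t - s)) * Real.exp (-ε * (t - s)) := by
      rw [← Real.exp_add]; congr 1; rw [hεdef]; ring
    rcases le_total T s with hTs | hsT
    · -- s ≥ T : ρ s ≤ ρ t * exp (ε (t - s))
      have hm : ρ s * Real.exp (ε * s) ≤ ρ t * Real.exp (ε * t) :=
        hmono (Set.mem_Ici.2 hTs) (Set.mem_Ici.2 ht) hst
      have hρs : ρ s ≤ ρ t * Real.exp (ε * (t - s)) := by
        have he : Real.exp (ε * t) = Real.exp (ε * s) * Real.exp (ε * (t - s)) := by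
          rw [← Real.exp_add]; congr 1; ring
        rw [he] at hm
        have hes := Real.exp_pos (ε * s)
        nlinarith [hm, hes]
      calc |k (t - s) * z s| ≤ (C * Real.exp (-α * (t - s))) * (M * ρ s) := h1
        _ ≤ (C * Real.exp (-α * (t - s))) * (M * (ρ t * Real.exp (ε * (t - s)))) := by
            apply mul_le_mul_of_nonneg_left _ (by positivity)
            exact mul_le_mul_of_nonneg_left hρs hM0
        _ = C * M * (Real.exp (-α * (t - s)) * Real.exp (ε * (t - s)) * ρ t) := by ring
        _ = C * M * (Real.exp (-ε * (t - s)) * ρ t) := by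
            rw [← Real.exp_add]
            congr 2
            rw [hεdef]; ring
        _ ≤ K * (Real.exp (-ε * (t - s)) * ρ t) := by
            apply mul_le_mul_of_nonneg_right _ (by positivity)
            rw [hKdef]
            nlinarith [div_nonneg hR0.le (hρpos T).le]
    · -- s ≤ T : ρ s ≤ R, and exp (-ε (t - T)) ≤ ρ t / ρ T
      have hρs : ρ s ≤ R := hx₀ ⟨hs0, hsT⟩
      have hm : ρ T * Real.exp (ε * T) ≤ ρ t * Real.exp (ε * t) :=
        hmono (Set.mem_Ici.2 (le_refl T)) (Set.mem_Ici.2 ht) ht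
      have hρT : ρ T * Real.exp (-ε * (t - T)) ≤ ρ t := by
        have he : Real.exp (ε * T) = Real.exp (ε * t) * Real.exp (-ε * (t - T)) := by
          rw [← Real.exp_add]; congr 1; ring
        rw [he] at hm
        have het := Real.exp_pos (ε * t)
        nlinarith [Real.exp_pos (-ε * (t - T))]
      have hexp2 : Real.exp (-ε * (t - s)) ≤ Real.exp (-ε * (t - T)) := by
        apply Real.exp_le_exp.2
        nlinarith
      calc |k (t - s) * z s| ≤ (C * Real.exp (-α * (t - s))) * (M * ρ s) := h1
        _ ≤ (C * (Real.exp (-ε * (t - s)) * Real.exp (-ε * (t - T)))) * (M * R) := by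
            rw [hexp]
            apply mul_le_mul
            · apply mul_le_mul_of_nonneg_left _ hC.le
              exact mul_le_mul_of_nonneg_left hexp2 (Real.exp_pos _).le
            · exact mul_le_mul_of_nonneg_left hρs hM0
            · positivity
            · positivity
        _ ≤ (C * (Real.exp (-ε * (t - s)) * (ρ t / ρ T))) * (M * R) := by
            apply mul_le_mul_of_nonneg_right _ (by positivity)
            apply mul_le_mul_of_nonneg_left _ hC.le
            apply mul_le_mul_of_nonneg_left _ (Real.exp_pos _).le
            rw [le_div_iff₀ (hρpos T)]
            nlinarith
        _ = (C * M * (R / ρ T)) * (Real.exp (-ε * (t - s)) * ρ t) := by ring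
        _ ≤ K * (Real.exp (-ε * (t - s)) * ρ t) := by
            apply mul_le_mul_of_nonneg_right _ (by positivity)
            rw [hKdef]; nlinarith
  -- the exponential integral bound
  have hint : ∀ t : ℝ, 0 ≤ t →
      ∫ s in (0:ℝ)..t, Real.exp (-ε * (t - s)) ≤ ε⁻¹ := by
    intro t _
    have hd : ∀ s ∈ Set.uIcc (0:ℝ) t, HasDerivAt
        (fun s => ε⁻¹ * Real.exp (-ε * (t - s))) (Real.exp (-ε * (t - s))) s := by
      intro s _
      have h1 : HasDerivAt (fun s : ℝ => -ε * (t - s)) ε s := by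
        simpa using ((hasDerivAt_id s).const_sub t).const_mul (-ε)
      have h2 := (h1.exp).const_mul ε⁻¹
      rw [mul_left_comm, inv_mul_cancel₀ hε0.ne', mul_one] at h2
      exact h2
    have hcont : IntervalIntegrable (fun s => Real.exp (-ε * (t - s)))
        volume 0 t := by
      apply Continuous.intervalIntegrable
      exact Real.continuous_exp.comp (continuous_const.mul (continuous_const.sub continuous_id))
    rw [intervalIntegral.integral_eq_sub_of_hasDerivAt hd hcont]
    have h3 := Real.exp_pos (-ε * (t - 0))
    have h4 : Real.exp (-ε * (t - t)) = 1 := by simp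
    rw [h4]
    have := (Real.exp_pos (-ε * (t - 0))).le
    nlinarith [inv_pos.2 hε0]
  -- conclude
  rw [isBigO_iff]
  refine ⟨K * ε⁻¹, ?_⟩
  filter_upwards [eventually_ge_atTop T] with t ht
  have ht0 : (0:ℝ) ≤ t := le_trans hT0le ht
  have hnorm : ‖ρ t‖ = ρ t := abs_of_pos (hρpos t)
  rw [hnorm]
  set f : ℝ → ℝ := fun s => k (t - s) * z s with hf
  set g : ℝ → ℝ := fun s => K * ρ t * Real.exp (-ε * (t - s)) with hg
  have hgcont : Continuous g := by
    apply continuous_const.mul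
    exact Real.continuous_exp.comp (continuous_const.mul (continuous_const.sub continuous_id))
  have hgi : IntegrableOn g (Set.Ioc 0 t) volume := hgcont.integrableOn_Ioc
  have h1 : ‖∫ s in (0:ℝ)..t, f s‖ ≤ ∫ s in Set.Ioc (0:ℝ) t, ‖f s‖ := by
    rw [intervalIntegral.integral_of_le ht0]
    exact norm_integral_le_integral_norm f
  have h2 : ∫ s in Set.Ioc (0:ℝ) t, ‖f s‖ ≤ ∫ s in Set.Ioc (0:ℝ) t, g s := by
    apply integral_mono_of_nonneg
    · exact Eventually.of_forall fun s => norm_nonneg _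
    · exact hgi
    · refine (ae_restrict_iff' measurableSet_Ioc).mpr ?_
      apply Eventually.of_forall
      intro s hs
      have := hkey t ht s ⟨hs.1.le, hs.2⟩
      calc ‖f s‖ = |k (t - s) * z s| := rfl
        _ ≤ K * (Real.exp (-ε * (t - s)) * ρ t) := this
        _ = g s := by rw [hg]; ring_nf
  have h3 : ∫ s in Set.Ioc (0:ℝ) t, g s ≤ K * ε⁻¹ * ρ t := by
    have : ∫ s in Set.Ioc (0:ℝ) t, g s
        = K * ρ t * ∫ s in Set.Ioc (0:ℝ) t, Real.exp (-ε * (t - s)) := by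
      rw [hg, MeasureTheory.integral_const_mul]
    rw [this]
    have h4 : ∫ s in Set.Ioc (0:ℝ) t, Real.exp (-ε * (t - s)) ≤ ε⁻¹ := by
      rw [← intervalIntegral.integral_of_le ht0]
      exact hint t ht0
    have h5 : 0 ≤ K * ρ t := mul_nonneg hK0 (hρpos t).le
    nlinarith
  calc ‖∫ s in (0:ℝ)..t, f s‖ ≤ ∫ s in Set.Ioc (0:ℝ) t, ‖f s‖ := h1
    _ ≤ ∫ s in Set.Ioc (0:ℝ) t, g s := h2
    _ ≤ K * ε⁻¹ * ρ t := h3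
end
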